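/- Long exact sequence comparison: given two long exact sequences of systems of abelian groups … → C_k → D_k → Q_k →∂ C_{k−1} → … such that each system Q_k has the property that every element of Q_{k,t} maps to 0 in Q_{k,t+2r} under the structure map, the maps C_k → D_k are 2r-isomorphisms for all k. -/

import Mathlib

open scoped NNReal

/-- A system of abelian groups: a functor `[0,∞) → Ab`. -/
structure SysAb where
  obj : ℝ≥0 → AddCommGrpCat
  map : ∀ {s t : ℝ≥0}, s ≤ t → (obj s ⟶ obj t)
  map_id : ∀ s : ℝ≥0, map (le_refl s) = CategoryTheory.CategoryStruct.id (obj s)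
  map_comp : ∀ {s t u : ℝ≥0} (h₁ : s ≤ t) (h₂ : t ≤ u),
    CategoryTheory.CategoryStruct.comp (map h₁) (map h₂) = map (h₁.trans h₂)

/-- A map of systems of abelian groups: a natural transformation. -/
structure SysAb.Hom (X Y : SysAb) where
  app : ∀ s : ℝ≥0, (X.obj s ⟶ Y.obj s)
  naturality : ∀ {s t : ℝ≥0} (h : s ≤ t) (x : X.obj s),
    app t (X.map h x) = Y.map h (app s x)

/-- `f` is an `r`-monomorphism: `f(a) = 0` in `B_t` implies `σ(a) = 0` in `A_{t+r}`. -/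
def SysAb.Hom.IsMono {X Y : SysAb} (r : ℝ≥0) (f : X.Hom Y) : Prop :=
  ∀ (s : ℝ≥0) (a : X.obj s), f.app s a = 0 →
    X.map (le_self_add : s ≤ s + r) a = 0

/-- `f` is an `r`-epimorphism: for `b ∈ B_t` there is `a ∈ A_{t+r}` with
`σ(b) = f(a)` in `B_{t+r}`. -/
def SysAb.Hom.IsEpi {X Y : SysAb} (r : ℝ≥0) (f : X.Hom Y) : Prop :=
  ∀ (s : ℝ≥0) (b : Y.obj s), ∃ a : X.obj (s + r),
    f.app (s + r) a = Y.map (le_self_add : s ≤ s + r) b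

/-- `f` is an `r`-isomorphism if it is both an `r`-monomorphism and an `r`-epimorphism. -/
def SysAb.Hom.IsIso {X Y : SysAb} (r : ℝ≥0) (f : X.Hom Y) : Prop :=
  f.IsMono r ∧ f.IsEpi r

/-- Long exact sequence comparison: given a long exact sequence of systems of abelian
groups `… → C_k → D_k → Q_k →∂ C_{k-1} → …` (exact at each parameter `t`, natural in
`t`) such that every element of `Q_{k,t}` maps to `0` in `Q_{k,t+2r}` under the structure
map, the maps `C_k → D_k` are `2r`-isomorphisms for all `k`. -/
theorem stmt17 (C D Q : ℤ → SysAb)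
    (φ : ∀ k : ℤ, (C k).Hom (D k)) (p : ∀ k : ℤ, (D k).Hom (Q k))
    (d : ∀ k : ℤ, (Q k).Hom (C (k - 1)))
    (exactD : ∀ (k : ℤ) (t : ℝ≥0) (b : (D k).obj t),
      (p k).app t b = 0 ↔ ∃ a : (C k).obj t, (φ k).app t a = b)
    (exactQ : ∀ (k : ℤ) (t : ℝ≥0) (q : (Q k).obj t),
      (d k).app t q = 0 ↔ ∃ b : (D k).obj t, (p k).app t b = q)
    (exactC : ∀ (k : ℤ) (t : ℝ≥0) (a : (C (k - 1)).obj t),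
      (φ (k - 1)).app t a = 0 ↔ ∃ q : (Q k).obj t, (d k).app t q = a)
    (r : ℝ≥0)
    (hQ : ∀ (k : ℤ) (t : ℝ≥0) (q : (Q k).obj t),
      (Q k).map (le_self_add : t ≤ t + 2 * r) q = 0) :
    ∀ k : ℤ, (φ k).IsIso (2 * r) := by
  have mono : ∀ k : ℤ, (φ (k - 1)).IsMono (2 * r) := by
    intro k s a ha
    obtain ⟨q, hq⟩ := (exactC k s a).mp ha
    rw [← hq, ← (d k).naturality (le_self_add : s ≤ s + 2 * r) q, hQ, map_zero]
  intro k
  constructor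
  · have h : k = k + 1 - 1 := by ring
    rw [h]
    exact mono (k + 1)
  · intro s b
    have h1 : (p k).app (s + 2 * r) ((D k).map le_self_add b) = 0 := by
      rw [(p k).naturality, hQ]
    exact (exactD k (s + 2 * r) _).mp h1
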